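/- Let K = T ∪ A be a knowledge base whose terminological part T enjoys the disjoint model union property and whose ABox is A. Then for every set S of mutually disjoint models of K and every I ∈ S, the generalized disjoint union ⊎^I S is a model of K. -/

import Mathlib

/-! Core formalization of SROIQ(D) without the universal role,
    with the concrete domain of integer intervals. -/

namespace SROIQPaper

/-- Role expressions: role names and inverse roles. -/
inductive Rl : Type
  | name : ℕ → Rl
  | inv  : ℕ → Rl
  deriving DecidableEq

/-- SROIQ(D) concepts without the universal role; the concrete domain is
    that of integer intervals (`∃f.[l,u]`). -/
inductive Cpt : Type
  | atom : ℕ → Cpt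
  | top : Cpt
  | bot : Cpt
  | nom : ℕ → Cpt                    -- nominal {a}
  | neg : Cpt → Cpt
  | and : Cpt → Cpt → Cpt
  | or : Cpt → Cpt → Cpt
  | ex : Rl → Cpt → Cpt
  | all : Rl → Cpt → Cpt
  | atLeast : ℕ → Rl → Cpt → Cpt
  | atMost : ℕ → Rl → Cpt → Cpt
  | selfC : Rl → Cpt
  | ival : ℕ → ℤ → ℤ → Cpt           -- ∃f.[l,u]
  deriving DecidableEq

/-- SROIQ(D) axioms: GCIs, role disjointness, complex role inclusions
    (terminological axioms), and concept/role assertions (ABox axioms). -/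
inductive Ax : Type
  | gci : Cpt → Cpt → Ax
  | rdisj : Rl → Rl → Ax
  | rincl : List Rl → Rl → Ax
  | cassert : Cpt → ℕ → Ax
  | rassert : Rl → ℕ → ℕ → Ax
  deriving DecidableEq

/-- An interpretation: concept names, role names, concrete properties,
    individual names. -/
structure Interp : Type 1 where
  Δ : Type
  nonempty : Nonempty Δ
  conc : ℕ → Set Δ
  role : ℕ → Set (Δ × Δ)
  cprop : ℕ → Set (Δ × ℤ)
  ind : ℕ → Δ

def Rl.sem (I : Interp) : Rl → Set (I.Δ × I.Δ)
  | .name r => I.role r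
  | .inv r => {p | (p.2, p.1) ∈ I.role r}

def Cpt.sem (I : Interp) : Cpt → Set I.Δ
  | .atom a => I.conc a
  | .top => Set.univ
  | .bot => ∅
  | .nom a => {I.ind a}
  | .neg c => (c.sem I)ᶜ
  | .and c d => c.sem I ∩ d.sem I
  | .or c d => c.sem I ∪ d.sem I
  | .ex r c => {x | ∃ y, (x, y) ∈ r.sem I ∧ y ∈ c.sem I}
  | .all r c => {x | ∀ y, (x, y) ∈ r.sem I → y ∈ c.sem I}
  | .atLeast n r c => {x | ∃ t : Finset I.Δ, n ≤ t.card ∧ ∀ y ∈ t, (x, y) ∈ r.sem I ∧ y ∈ c.sem I}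
  | .atMost n r c =>
      {x | {y | (x, y) ∈ r.sem I ∧ y ∈ c.sem I}.Finite ∧
           {y | (x, y) ∈ r.sem I ∧ y ∈ c.sem I}.ncard ≤ n}
  | .selfC r => {x | (x, x) ∈ r.sem I}
  | .ival f l u => {x | ∃ i : ℤ, l ≤ i ∧ i ≤ u ∧ (x, i) ∈ I.cprop f}

def chain (I : Interp) : List Rl → Set (I.Δ × I.Δ)
  | [] => {p | p.1 = p.2}
  | r :: rest => {p | ∃ z, (p.1, z) ∈ r.sem I ∧ (z, p.2) ∈ chain I rest}

def Interp.satAx (I : Interp) : Ax → Prop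
  | .gci c d => c.sem I ⊆ d.sem I
  | .rdisj r s => r.sem I ∩ s.sem I = ∅
  | .rincl rs r => chain I rs ⊆ r.sem I
  | .cassert c a => I.ind a ∈ c.sem I
  | .rassert r a b => (I.ind a, I.ind b) ∈ r.sem I

def Interp.sat (I : Interp) (K : Set Ax) : Prop := ∀ ax ∈ K, I.satAx ax

/-- Terminological axioms. -/
def isTerm : Ax → Prop
  | .gci _ _ => True
  | .rdisj _ _ => True
  | .rincl _ _ => True
  | _ => False

/-- The terminological part (TBox) of a knowledge base. -/
def termPart (K : Set Ax) : Set Ax := {ax | ax ∈ K ∧ isTerm ax}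

/-- The ABox of a knowledge base. -/
def abox (K : Set Ax) : Set Ax := {ax | ax ∈ K ∧ ¬ isTerm ax}

/-! ### Signatures -/

def Rl.base : Rl → ℕ
  | .name r => r
  | .inv r => r

def Cpt.cNames : Cpt → Set ℕ
  | .atom a => {a}
  | .neg c => c.cNames
  | .and c d => c.cNames ∪ d.cNames
  | .or c d => c.cNames ∪ d.cNames
  | .ex _ c => c.cNames
  | .all _ c => c.cNames
  | .atLeast _ _ c => c.cNames
  | .atMost _ _ c => c.cNames
  | _ => ∅

def Cpt.rNames : Cpt → Set ℕ
  | .neg c => c.rNames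
  | .and c d => c.rNames ∪ d.rNames
  | .or c d => c.rNames ∪ d.rNames
  | .ex r c => insert r.base c.rNames
  | .all r c => insert r.base c.rNames
  | .atLeast _ r c => insert r.base c.rNames
  | .atMost _ r c => insert r.base c.rNames
  | .selfC r => {r.base}
  | _ => ∅

def Cpt.fNames : Cpt → Set ℕ
  | .neg c => c.fNames
  | .and c d => c.fNames ∪ d.fNames
  | .or c d => c.fNames ∪ d.fNames
  | .ex _ c => c.fNames
  | .all _ c => c.fNames
  | .atLeast _ _ c => c.fNames
  | .atMost _ _ c => c.fNames
  | .ival f _ _ => {f}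
  | _ => ∅

def Cpt.iNames : Cpt → Set ℕ
  | .nom a => {a}
  | .neg c => c.iNames
  | .and c d => c.iNames ∪ d.iNames
  | .or c d => c.iNames ∪ d.iNames
  | .ex _ c => c.iNames
  | .all _ c => c.iNames
  | .atLeast _ _ c => c.iNames
  | .atMost _ _ c => c.iNames
  | _ => ∅

def Ax.cNames : Ax → Set ℕ
  | .gci c d => c.cNames ∪ d.cNames
  | .cassert c _ => c.cNames
  | _ => ∅

def Ax.rNames : Ax → Set ℕ
  | .gci c d => c.rNames ∪ d.rNames
  | .rdisj r s => {r.base, s.base}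
  | .rincl rs r => insert r.base {n | ∃ s ∈ rs, n = Rl.base s}
  | .cassert c _ => c.rNames
  | .rassert r _ _ => {r.base}

def Ax.fNames : Ax → Set ℕ
  | .gci c d => c.fNames ∪ d.fNames
  | .cassert c _ => c.fNames
  | _ => ∅

def Ax.iNames : Ax → Set ℕ
  | .gci c d => c.iNames ∪ d.iNames
  | .cassert c a => insert a c.iNames
  | .rassert _ a b => {a, b}
  | _ => ∅

def sigC (K : Set Ax) : Set ℕ := {n | ∃ ax ∈ K, n ∈ Ax.cNames ax}
def sigR (K : Set Ax) : Set ℕ := {n | ∃ ax ∈ K, n ∈ Ax.rNames ax}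
def sigF (K : Set Ax) : Set ℕ := {n | ∃ ax ∈ K, n ∈ Ax.fNames ax}
def sigI (K : Set Ax) : Set ℕ := {n | ∃ ax ∈ K, n ∈ Ax.iNames ax}

/-! ### Disjoint unions of interpretations -/

/-- The (generalized) disjoint union `⊎^{i₀} (J i)` of a family of interpretations:
    the family is made mutually disjoint by forming the sigma type, and individual
    names are interpreted in the component `i₀`. -/
def sigmaUnion {ι : Type} (J : ι → Interp) (i₀ : ι) : Interp where
  Δ := Σ i, (J i).Δ
  nonempty := ⟨⟨i₀, Classical.choice (J i₀).nonempty⟩⟩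
  conc := fun a => {x | x.2 ∈ (J x.1).conc a}
  role := fun r => {p | ∃ (i : ι) (x y : (J i).Δ),
    p.1 = ⟨i, x⟩ ∧ p.2 = ⟨i, y⟩ ∧ (x, y) ∈ (J i).role r}
  cprop := fun f => {q | (q.1.2, q.2) ∈ (J q.1.1).cprop f}
  ind := fun a => ⟨i₀, (J i₀).ind a⟩

/-- `T` enjoys the disjoint model union property: the (generalized) disjoint union of
    any family of mutually disjoint models of `T` is again a model of `T`. -/
def DMUP (T : Set Ax) : Prop :=
  ∀ (ι : Type) (J : ι → Interp) (i₀ : ι),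
    (∀ i, (J i).sat T) → (sigmaUnion J i₀).sat T

/-! ### Locality, oracle queries -/

/-- The interpretation obtained from `I` by interpreting every concept, role and
    concrete-property name outside the signature `(SgC, SgR, SgF)` as the empty set. -/
def localize (I : Interp) (SgC SgR SgF : Set ℕ) : Interp where
  Δ := I.Δ
  nonempty := I.nonempty
  conc := fun a => {d | a ∈ SgC ∧ d ∈ I.conc a}
  role := fun r => {p | r ∈ SgR ∧ p ∈ I.role r}
  cprop := fun f => {p | f ∈ SgF ∧ p ∈ I.cprop f}
  ind := I.ind

/-- `T` is local w.r.t. a signature: every interpretation of the signature extends to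
    a model of `T` by emptying all concept/role (and concrete-property) names outside it. -/
def LocalWrt (T : Set Ax) (SgC SgR SgF : Set ℕ) : Prop :=
  ∀ I : Interp, (localize I SgC SgR SgF).sat T

/-- An oracle query `A₁ ⊓ … ⊓ A_m ⊑ A_{m+1} ⊔ … ⊔ Aₙ` (rhs `⊥` when empty). -/
structure OQuery : Type where
  lhs : List ℕ
  rhs : List ℕ

def Interp.satQ (I : Interp) (q : OQuery) : Prop :=
  {d | ∀ a ∈ q.lhs, d ∈ I.conc a} ⊆ {d | ∃ b ∈ q.rhs, d ∈ I.conc b}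

/-- `pos(O)`: the queries over the concept names of `sig(O)` entailed by `O`. -/
def pos (O : Set Ax) : Set OQuery :=
  {q | (∀ a ∈ q.lhs, a ∈ sigC O) ∧ (∀ b ∈ q.rhs, b ∈ sigC O) ∧
     ∀ I : Interp, I.sat O → I.satQ q}

/-- `O` is convex w.r.t. the oracle query language `L_O`. -/
def ConvexPos (O : Set Ax) : Prop :=
  ∀ q ∈ pos O, ∃ b ∈ q.rhs, (OQuery.mk q.lhs [b]) ∈ pos O

end SROIQPaper

namespace SROIQPaper

lemma roleSem_iff {ι : Type} (J : ι → Interp) (i₀ : ι) (r : Rl) (x : (J i₀).Δ)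
    (z : (sigmaUnion J i₀).Δ) :
    ((⟨i₀, x⟩, z) ∈ r.sem (sigmaUnion J i₀)) ↔ ∃ y, z = ⟨i₀, y⟩ ∧ (x, y) ∈ r.sem (J i₀) := by
  cases r with
  | name n =>
    constructor
    · rintro ⟨i, a, b, h1, h2, h3⟩
      obtain ⟨rfl, h⟩ := Sigma.mk.inj_iff.mp h1
      obtain rfl := eq_of_heq h
      exact ⟨b, h2, h3⟩
    · rintro ⟨y, rfl, hy⟩
      exact ⟨i₀, x, y, rfl, rfl, hy⟩
  | inv n =>
    constructor
    · rintro ⟨i, a, b, h1, h2, h3⟩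
      obtain ⟨rfl, h⟩ := Sigma.mk.inj_iff.mp h2
      obtain rfl := eq_of_heq h
      exact ⟨a, h1, h3⟩
    · rintro ⟨y, rfl, hy⟩
      exact ⟨i₀, y, x, rfl, rfl, hy⟩

lemma atLeast_transfer {α β : Type} (g : α → β) (hg : Function.Injective g) (S : Set α) (n : ℕ) :
    (∃ t : Finset β, n ≤ t.card ∧ ∀ y ∈ t, y ∈ g '' S) ↔
    (∃ t : Finset α, n ≤ t.card ∧ ∀ y ∈ t, y ∈ S) := by
  classical
  constructor
  · rintro ⟨t, hn, ht⟩
    have hts : (↑t : Set β) ⊆ g '' S := ht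
    have hsub : (↑t : Set β) ⊆ Set.range g := hts.trans (Set.image_subset_range _ _)
    have hfin : (g ⁻¹' ↑t).Finite := t.finite_toSet.preimage hg.injOn
    have himg : g '' (g ⁻¹' ↑t) = ↑t := Set.image_preimage_eq_of_subset hsub
    refine ⟨hfin.toFinset, ?_, ?_⟩
    · have : (g ⁻¹' (↑t : Set β)).ncard = t.card := by
        rw [← Set.ncard_image_of_injective _ hg, himg, Set.ncard_coe_finset]
      rw [Set.ncard_eq_toFinset_card _ hfin] at this
      omega
    · intro y hy
      rw [Set.Finite.mem_toFinset] at hy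
      obtain ⟨y', hy', heq⟩ := hts hy
      exact hg heq ▸ hy'
  · rintro ⟨t, hn, ht⟩
    refine ⟨t.image g, ?_, ?_⟩
    · rwa [Finset.card_image_of_injective _ hg]
    · intro y hy
      obtain ⟨a, ha, rfl⟩ := Finset.mem_image.mp hy
      exact ⟨a, ht a ha, rfl⟩

lemma cptSem_iff {ι : Type} (J : ι → Interp) (i₀ : ι) (C : Cpt) (x : (J i₀).Δ) :
    ((⟨i₀, x⟩ : (sigmaUnion J i₀).Δ) ∈ C.sem (sigmaUnion J i₀)) ↔ x ∈ C.sem (J i₀) := by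
  have hg : Function.Injective (Sigma.mk (β := fun i => (J i).Δ) i₀) :=
    fun a b h => eq_of_heq (Sigma.mk.inj_iff.mp h).2
  induction C generalizing x with
  | atom a => rfl
  | top => simp [Cpt.sem]; exact trivial
  | bot => simp [Cpt.sem]; exact fun h => h
  | nom a =>
    simp only [Cpt.sem, Set.mem_singleton_iff, sigmaUnion]
    exact ⟨fun h => hg h, fun h => by rw [h]; exact rfl⟩
  | neg c ih => simp only [Cpt.sem, Set.mem_compl_iff, ih]; exact not_congr (ih x)
  | and c d ihc ihd => simp only [Cpt.sem, Set.mem_inter_iff, ihc, ihd]; exact and_congr (ihc x) (ihd x)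
  | or c d ihc ihd => simp only [Cpt.sem, Set.mem_union, ihc, ihd]; exact or_congr (ihc x) (ihd x)
  | ex r c ih =>
    simp only [Cpt.sem, Set.mem_setOf_eq]
    constructor
    · rintro ⟨z, hz, hc⟩
      obtain ⟨y, rfl, hy⟩ := (roleSem_iff J i₀ r x z).mp hz
      exact ⟨y, hy, (ih y).mp hc⟩
    · rintro ⟨y, hy, hc⟩
      exact ⟨⟨i₀, y⟩, (roleSem_iff J i₀ r x _).mpr ⟨y, rfl, hy⟩, (ih y).mpr hc⟩
  | all r c ih =>
    simp only [Cpt.sem, Set.mem_setOf_eq]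
    constructor
    · intro h y hy
      exact (ih y).mp (h ⟨i₀, y⟩ ((roleSem_iff J i₀ r x _).mpr ⟨y, rfl, hy⟩))
    · intro h z hz
      obtain ⟨y, rfl, hy⟩ := (roleSem_iff J i₀ r x z).mp hz
      exact (ih y).mpr (h y hy)
  | atLeast n r c ih =>
    simp only [Cpt.sem, Set.mem_setOf_eq]
    have hset : {z | ((⟨i₀, x⟩ : (sigmaUnion J i₀).Δ), z) ∈ r.sem (sigmaUnion J i₀) ∧
        z ∈ c.sem (sigmaUnion J i₀)} =
        Sigma.mk i₀ '' {y : (J i₀).Δ | (x, y) ∈ r.sem (J i₀) ∧ y ∈ c.sem (J i₀)} := by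
      ext z
      simp only [Set.mem_setOf_eq, Set.mem_image]
      constructor
      · rintro ⟨hz, hc⟩
        obtain ⟨y, rfl, hy⟩ := (roleSem_iff J i₀ r x z).mp hz
        exact ⟨y, ⟨hy, (ih y).mp hc⟩, rfl⟩
      · rintro ⟨y, ⟨hy, hc⟩, rfl⟩
        exact ⟨(roleSem_iff J i₀ r x _).mpr ⟨y, rfl, hy⟩, (ih y).mpr hc⟩
    constructor
    · rintro ⟨t, hn, ht⟩
      have := (atLeast_transfer (Sigma.mk i₀) hg _ n).mp ⟨t, hn, fun y hy => (Set.ext_iff.mp hset y).mp (ht y hy)⟩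
      exact this
    · rintro ⟨t, hn, ht⟩
      obtain ⟨t', hn', ht'⟩ := (atLeast_transfer (Sigma.mk i₀) hg _ n).mpr ⟨t, hn, ht⟩
      exact ⟨t', hn', fun y hy => (Set.ext_iff.mp hset y).mpr (ht' y hy)⟩
  | atMost n r c ih =>
    simp only [Cpt.sem, Set.mem_setOf_eq]
    have hset : {z | ((⟨i₀, x⟩ : (sigmaUnion J i₀).Δ), z) ∈ r.sem (sigmaUnion J i₀) ∧
        z ∈ c.sem (sigmaUnion J i₀)} =
        Sigma.mk i₀ '' {y : (J i₀).Δ | (x, y) ∈ r.sem (J i₀) ∧ y ∈ c.sem (J i₀)} := by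
      ext z
      simp only [Set.mem_setOf_eq, Set.mem_image]
      constructor
      · rintro ⟨hz, hc⟩
        obtain ⟨y, rfl, hy⟩ := (roleSem_iff J i₀ r x z).mp hz
        exact ⟨y, ⟨hy, (ih y).mp hc⟩, rfl⟩
      · rintro ⟨y, ⟨hy, hc⟩, rfl⟩
        exact ⟨(roleSem_iff J i₀ r x _).mpr ⟨y, rfl, hy⟩, (ih y).mpr hc⟩
    have hfin : {z | ((⟨i₀, x⟩ : (sigmaUnion J i₀).Δ), z) ∈ r.sem (sigmaUnion J i₀) ∧
        z ∈ c.sem (sigmaUnion J i₀)}.Finite ↔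
        {y | (x, y) ∈ r.sem (J i₀) ∧ y ∈ c.sem (J i₀)}.Finite := by
      rw [hset]; exact Set.finite_image_iff hg.injOn
    have hcard : {z | ((⟨i₀, x⟩ : (sigmaUnion J i₀).Δ), z) ∈ r.sem (sigmaUnion J i₀) ∧
        z ∈ c.sem (sigmaUnion J i₀)}.ncard =
        {y | (x, y) ∈ r.sem (J i₀) ∧ y ∈ c.sem (J i₀)}.ncard := by
      rw [hset]; exact Set.ncard_image_of_injective _ hg
    exact and_congr hfin (iff_of_eq (congrArg (· ≤ n) hcard))
  | selfC r =>
    simp only [Cpt.sem, Set.mem_setOf_eq]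
    constructor
    · intro h
      obtain ⟨y, hy, h'⟩ := (roleSem_iff J i₀ r x _).mp h
      obtain rfl := hg hy
      exact h'
    · intro h
      exact (roleSem_iff J i₀ r x _).mpr ⟨x, rfl, h⟩
  | ival f l u =>
    simp only [Cpt.sem, Set.mem_setOf_eq]
    rfl

/-- let `K = T ∪ A` be a knowledge base whose terminological part `T`
    enjoys the disjoint model union property (whence `sig(T)` contains no individual
    names) and whose ABox is `A`. Then for every family of mutually disjoint models
    of `K` and every member `i₀` of the family, the generalized disjoint union
    `⊎^{i₀}` of the family is a model of `K`. -/
theorem statement_0 (K : Set Ax) (hK : K.Finite)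
    (hNoInd : ∀ ax ∈ termPart K, Ax.iNames ax = ∅)
    (hDMUP : DMUP (termPart K))
    {ι : Type} (J : ι → Interp) (i₀ : ι)
    (hmod : ∀ i, (J i).sat K) :
    (sigmaUnion J i₀).sat K := by
  intro ax hax
  have hterm : ∀ ax' ∈ termPart K, (sigmaUnion J i₀).satAx ax' := by
    intro ax' hax'
    exact hDMUP ι J i₀ (fun i ax'' hax'' => hmod i ax'' hax''.1) ax' hax'
  cases ax with
  | gci c d => exact hterm _ ⟨hax, trivial⟩
  | rdisj r s => exact hterm _ ⟨hax, trivial⟩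
  | rincl rs r => exact hterm _ ⟨hax, trivial⟩
  | cassert c a =>
    have := hmod i₀ _ hax
    exact (cptSem_iff J i₀ c _).mpr this
  | rassert r a b =>
    have := hmod i₀ _ hax
    exact (roleSem_iff J i₀ r _ _).mpr ⟨_, rfl, this⟩

end SROIQPaper
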